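/- arXiv:1605.08525 — 2 statements merged into one kernel-verified Lean document; each statement's English description precedes it below -/
import Mathlib

section
/- Let (x_n) and (a_n) be sequences of positive reals with (a_n) bounded, and define h_n := (x_n + √(a_n³ + x_n²))^{1/3} + (x_n − √(a_n³ + x_n²))^{1/3} (real cube roots). If x_n = o(a_n^{3/2}) then h_n ~ (2/3) x_n/a_n as n → ∞, while if a_n = o(x_n^{2/3}) then h_n ~ (2 x_n)^{1/3}. -/
open Filter Real

/-- The real cube root (negative reals get the negative real cube root). -/
noncomputable def cbrt (x : ℝ) : ℝ := if 0 ≤ x then x ^ ((1:ℝ)/3) else -((-x) ^ ((1:ℝ)/3))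

private lemma cube_rpow_third {h : ℝ} (hh : 0 ≤ h) : (h ^ 3) ^ ((1:ℝ)/3) = h := by
  rw [← Real.rpow_natCast h 3, ← Real.rpow_mul hh]
  norm_num

private lemma cbrt_aux {x a : ℝ} (hx : 0 < x) (ha : 0 < a) :
    0 < cbrt (x + Real.sqrt (a ^ 3 + x ^ 2)) + cbrt (x - Real.sqrt (a ^ 3 + x ^ 2)) ∧
    (cbrt (x + Real.sqrt (a ^ 3 + x ^ 2)) + cbrt (x - Real.sqrt (a ^ 3 + x ^ 2))) ^ 3
      + 3 * a * (cbrt (x + Real.sqrt (a ^ 3 + x ^ 2)) + cbrt (x - Real.sqrt (a ^ 3 + x ^ 2)))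
      = 2 * x := by
  set D := a ^ 3 + x ^ 2 with hD
  have hDpos : 0 < D := by positivity
  have hsq : Real.sqrt D ^ 2 = D := Real.sq_sqrt hDpos.le
  have hsx : x < Real.sqrt D := by
    calc x = Real.sqrt (x ^ 2) := by rw [Real.sqrt_sq hx.le]
    _ < Real.sqrt D := Real.sqrt_lt_sqrt (sq_nonneg x) (by linarith [pow_pos ha 3])
  have hu : 0 ≤ x + Real.sqrt D := by linarith
  have hv : ¬ (0 ≤ x - Real.sqrt D) := by linarith
  have h1 : cbrt (x + Real.sqrt D) = (x + Real.sqrt D) ^ ((1:ℝ)/3) := if_pos hu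
  have h2 : cbrt (x - Real.sqrt D) = -((Real.sqrt D - x) ^ ((1:ℝ)/3)) := by
    rw [cbrt, if_neg hv, neg_sub]
  rw [h1, h2]
  set c := (x + Real.sqrt D) ^ ((1:ℝ)/3) with hc
  set e := (Real.sqrt D - x) ^ ((1:ℝ)/3) with he
  have hce : c * e = a := by
    rw [hc, he, ← Real.mul_rpow hu (by linarith)]
    have hprod : (x + Real.sqrt D) * (Real.sqrt D - x) = a ^ 3 := by nlinarith [hsq]
    rw [hprod, cube_rpow_third ha.le]
  have hc3 : c ^ 3 = x + Real.sqrt D := by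
    rw [hc, ← Real.rpow_natCast _ 3, ← Real.rpow_mul hu]; norm_num
  have he3 : e ^ 3 = Real.sqrt D - x := by
    rw [he, ← Real.rpow_natCast _ 3, ← Real.rpow_mul (by linarith : (0:ℝ) ≤ Real.sqrt D - x)]
    norm_num
  have hlt : e < c :=
    Real.rpow_lt_rpow (by linarith) (by linarith) (by norm_num)
  constructor
  · linarith
  · have hexp : (c + -e) ^ 3 = c ^ 3 - e ^ 3 - 3 * (c * e) * (c + -e) := by ring
    rw [hexp, hc3, he3, hce]; ring

private lemma ratio1 {A B X : ℝ} (hA : 0 < A) (hB : 0 < B)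
    (hid : A ^ 3 + 3 * B * A = 2 * X) :
    A / ((2/3) * X / B) = (A ^ 2 / (3 * B) + 1)⁻¹ := by
  have hX : 0 < X := by nlinarith [pow_pos hA 3, mul_pos hB hA]
  have hd : 0 < A ^ 2 / (3 * B) + 1 := by positivity
  have hne1 : (2/3) * X / B ≠ 0 := by positivity
  field_simp
  linear_combination hid

private lemma ratio2 {A B X : ℝ} (hA : 0 < A) (hB : 0 < B)
    (hid : A ^ 3 + 3 * B * A = 2 * X) :
    A / (2 * X) ^ ((1:ℝ)/3) = ((1 + 3 * B / A ^ 2)⁻¹) ^ ((1:ℝ)/3) := by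
  have hX : 0 < X := by nlinarith [pow_pos hA 3, mul_pos hB hA]
  have hfrac : (1 + 3 * B / A ^ 2)⁻¹ = A ^ 3 / (2 * X) := by
    rw [← hid]
    have hden : 0 < A ^ 3 + 3 * B * A := by positivity
    field_simp
  rw [hfrac, Real.div_rpow (by positivity) (by positivity), cube_rpow_third hA.le]

/-- Asymptotics of `h_n = (x_n + √(a_n³+x_n²))^{1/3} + (x_n - √(a_n³+x_n²))^{1/3}`:
`h_n ~ (2/3) x_n/a_n` when `x_n = o(a_n^{3/2})`, and `h_n ~ (2 x_n)^{1/3}`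
when `a_n = o(x_n^{2/3})`. -/
theorem stmt11 (x a : ℕ → ℝ) (hx : ∀ n, 0 < x n) (ha : ∀ n, 0 < a n)
    (hbdd : ∃ M : ℝ, ∀ n, a n ≤ M) :
    (Tendsto (fun n => x n / a n ^ ((3:ℝ)/2)) atTop (nhds 0) →
      Tendsto (fun n =>
        (cbrt (x n + Real.sqrt (a n ^ 3 + x n ^ 2))
          + cbrt (x n - Real.sqrt (a n ^ 3 + x n ^ 2)))
          / ((2/3) * x n / a n)) atTop (nhds 1))
    ∧ (Tendsto (fun n => a n / x n ^ ((2:ℝ)/3)) atTop (nhds 0) →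
      Tendsto (fun n =>
        (cbrt (x n + Real.sqrt (a n ^ 3 + x n ^ 2))
          + cbrt (x n - Real.sqrt (a n ^ 3 + x n ^ 2)))
          / (2 * x n) ^ ((1:ℝ)/3)) atTop (nhds 1)) := by
  set h : ℕ → ℝ := fun n =>
    cbrt (x n + Real.sqrt (a n ^ 3 + x n ^ 2)) + cbrt (x n - Real.sqrt (a n ^ 3 + x n ^ 2))
    with hhdef
  have hpos : ∀ n, 0 < h n := fun n => (cbrt_aux (hx n) (ha n)).1
  have hid : ∀ n, h n ^ 3 + 3 * a n * h n = 2 * x n := fun n => (cbrt_aux (hx n) (ha n)).2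
  constructor
  · -- first part
    intro hs
    have hble : ∀ n, h n ^ 2 / (3 * a n) ≤
        (2:ℝ) ^ ((2:ℝ)/3) / 3 * (x n / a n ^ ((3:ℝ)/2)) ^ ((2:ℝ)/3) := by
      intro n
      have h3le : h n ^ 3 ≤ 2 * x n := by
        have := hid n
        nlinarith [mul_pos (ha n) (hpos n)]
      have hle1 : h n ≤ (2 * x n) ^ ((1:ℝ)/3) := by
        calc h n = (h n ^ 3) ^ ((1:ℝ)/3) := (cube_rpow_third (hpos n).le).symm
        _ ≤ (2 * x n) ^ ((1:ℝ)/3) :=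
          Real.rpow_le_rpow (pow_nonneg (hpos n).le 3) h3le (by norm_num)
      have hsq : h n ^ 2 ≤ ((2 * x n) ^ ((1:ℝ)/3)) ^ 2 :=
        pow_le_pow_left₀ (hpos n).le hle1 2
      have heq2 : ((2 * x n) ^ ((1:ℝ)/3)) ^ 2 = (2 * x n) ^ ((2:ℝ)/3) := by
        rw [← Real.rpow_natCast ((2 * x n) ^ ((1:ℝ)/3)) 2,
          ← Real.rpow_mul (by linarith [hx n] : (0:ℝ) ≤ 2 * x n)]
        norm_num
      have heq3 : (x n / a n ^ ((3:ℝ)/2)) ^ ((2:ℝ)/3) = x n ^ ((2:ℝ)/3) / a n := by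
        rw [Real.div_rpow (hx n).le (Real.rpow_nonneg (ha n).le _),
          ← Real.rpow_mul (ha n).le]
        norm_num
      have heq4 : (2 * x n) ^ ((2:ℝ)/3) = (2:ℝ) ^ ((2:ℝ)/3) * x n ^ ((2:ℝ)/3) :=
        Real.mul_rpow (by norm_num) (hx n).le
      rw [heq3]
      calc h n ^ 2 / (3 * a n) ≤ (2 * x n) ^ ((2:ℝ)/3) / (3 * a n) := by
            apply (div_le_div_iff_of_pos_right (by linarith [ha n] : (0:ℝ) < 3 * a n)).mpr
            rw [← heq2]; exact hsq
      _ = (2:ℝ) ^ ((2:ℝ)/3) / 3 * (x n ^ ((2:ℝ)/3) / a n) := by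
            rw [heq4]
            have := (ha n).ne'
            field_simp
    have hbt : Tendsto (fun n => (2:ℝ) ^ ((2:ℝ)/3) / 3 * (x n / a n ^ ((3:ℝ)/2)) ^ ((2:ℝ)/3))
        atTop (nhds 0) := by
      have := (hs.rpow_const (p := (2:ℝ)/3) (Or.inr (by norm_num))).const_mul
        ((2:ℝ) ^ ((2:ℝ)/3) / 3)
      simpa [Real.zero_rpow (by norm_num : ((2:ℝ)/3) ≠ 0)] using this
    have ht : Tendsto (fun n => h n ^ 2 / (3 * a n)) atTop (nhds 0) :=
      tendsto_of_tendsto_of_tendsto_of_le_of_le tendsto_const_nhds hbt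
        (fun n => div_nonneg (sq_nonneg _) (by linarith [ha n])) hble
    have h0 : Tendsto (fun n => h n ^ 2 / (3 * a n) + 1) atTop (nhds 1) := by
      simpa using ht.add tendsto_const_nhds
    have hfin : Tendsto (fun n => (h n ^ 2 / (3 * a n) + 1)⁻¹) atTop (nhds 1) := by
      simpa using h0.inv₀ one_ne_zero
    exact hfin.congr fun n => (ratio1 (hpos n) (ha n) (hid n)).symm
  · -- second part
    intro hs
    have hE : ∀ᶠ n in atTop, a n / x n ^ ((2:ℝ)/3) < 1/3 :=
      hs.eventually (gt_mem_nhds (by norm_num))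
    have hxh : ∀ᶠ n in atTop, x n ≤ h n ^ 3 := by
      filter_upwards [hE] with n hn
      by_contra hc
      push_neg at hc
      have h3ah : x n < 3 * a n * h n := by linarith [hid n]
      have hhp : h n < x n ^ ((1:ℝ)/3) := by
        calc h n = (h n ^ 3) ^ ((1:ℝ)/3) := (cube_rpow_third (hpos n).le).symm
        _ < x n ^ ((1:ℝ)/3) :=
          Real.rpow_lt_rpow (pow_nonneg (hpos n).le 3) hc (by norm_num)
      set p := x n ^ ((1:ℝ)/3) with hp
      have hppos : 0 < p := Real.rpow_pos_of_pos (hx n) _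
      have hp3 : p ^ 3 = x n := by
        rw [hp, ← Real.rpow_natCast _ 3, ← Real.rpow_mul (hx n).le]; norm_num
      have hp2 : p ^ 2 = x n ^ ((2:ℝ)/3) := by
        rw [hp, ← Real.rpow_natCast _ 2, ← Real.rpow_mul (hx n).le]; norm_num
      have h3a : 3 * a n < p ^ 2 := by
        have hxp : 0 < x n ^ ((2:ℝ)/3) := Real.rpow_pos_of_pos (hx n) _
        rw [div_lt_iff₀ hxp] at hn
        rw [hp2]; linarith
      have c1 : 3 * a n * h n < 3 * a n * p := by
        have : 0 < 3 * a n := by linarith [ha n]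
        nlinarith
      have c2 : 3 * a n * p < p ^ 2 * p := by nlinarith
      have c3 : p ^ 2 * p = x n := by rw [← hp3]; ring
      linarith
    have hble : ∀ᶠ n in atTop, 3 * a n / h n ^ 2 ≤ 3 * (a n / x n ^ ((2:ℝ)/3)) := by
      filter_upwards [hxh] with n hn
      have hhp : x n ^ ((1:ℝ)/3) ≤ h n := by
        calc x n ^ ((1:ℝ)/3) ≤ (h n ^ 3) ^ ((1:ℝ)/3) :=
              Real.rpow_le_rpow (hx n).le hn (by norm_num)
        _ = h n := cube_rpow_third (hpos n).le
      have hx23 : x n ^ ((2:ℝ)/3) ≤ h n ^ 2 := by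
        have hp2 : (x n ^ ((1:ℝ)/3)) ^ 2 = x n ^ ((2:ℝ)/3) := by
          rw [← Real.rpow_natCast _ 2, ← Real.rpow_mul (hx n).le]; norm_num
        calc x n ^ ((2:ℝ)/3) = (x n ^ ((1:ℝ)/3)) ^ 2 := hp2.symm
        _ ≤ h n ^ 2 := pow_le_pow_left₀ (Real.rpow_nonneg (hx n).le _) hhp 2
      have hxp : (0:ℝ) < x n ^ ((2:ℝ)/3) := Real.rpow_pos_of_pos (hx n) _
      rw [mul_div_assoc]
      have hdd : a n / h n ^ 2 ≤ a n / x n ^ ((2:ℝ)/3) :=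
        div_le_div_of_nonneg_left (ha n).le hxp hx23
      linarith
    have hbt : Tendsto (fun n => 3 * (a n / x n ^ ((2:ℝ)/3))) atTop (nhds 0) := by
      simpa using hs.const_mul (3:ℝ)
    have ht : Tendsto (fun n => 3 * a n / h n ^ 2) atTop (nhds 0) :=
      tendsto_of_tendsto_of_tendsto_of_le_of_le' tendsto_const_nhds hbt
        (Eventually.of_forall fun n =>
          div_nonneg (by linarith [ha n]) (sq_nonneg _)) hble
    have h0 : Tendsto (fun n => 1 + 3 * a n / h n ^ 2) atTop (nhds 1) := by
      simpa using tendsto_const_nhds.add ht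
    have h1 : Tendsto (fun n => (1 + 3 * a n / h n ^ 2)⁻¹) atTop (nhds 1) := by
      simpa using h0.inv₀ one_ne_zero
    have hfin : Tendsto (fun n => ((1 + 3 * a n / h n ^ 2)⁻¹) ^ ((1:ℝ)/3)) atTop (nhds 1) := by
      have := h1.rpow_const (p := (1:ℝ)/3) (Or.inl one_ne_zero)
      simpa using this
    exact hfin.congr fun n => (ratio2 (hpos n) (ha n) (hid n)).symm
end

section
/- With ρ_n := ∏_{k=1}^n (2k)/(2k−1), γ_k := 1/k, and r_m satisfying |r_m| ≤ C₁/m² for all m ≥ 1, there exist constants C₃, C₄ > 0 such that for all 1 ≤ l < k ≤ n: (γ_k/ρ_{k−1}) Σ_{m=l}^{k−1} |r_m| ρ_m/√m ≤ C₃/(k^{3/2} l), and Σ_{k=l+1}^n (γ_k/ρ_{k−1}) Σ_{m=l}^{k−1} |r_m| ρ_m/√m ≤ C₄/l^{3/2}. -/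
open Real


noncomputable def P (n : ℕ) : ℝ := ∏ k ∈ Finset.Icc 1 n, (2 * (k:ℝ)) / (2 * (k:ℝ) - 1)

lemma P_pos (n : ℕ) : 0 < P n := by
  apply Finset.prod_pos
  intro k hk
  have h1 : 1 ≤ k := (Finset.mem_Icc.1 hk).1
  have hk1 : (1:ℝ) ≤ k := by exact_mod_cast h1
  apply div_pos <;> linarith

lemma P_succ (n : ℕ) : P (n+1) = P n * ((2*(n:ℝ)+2)/(2*(n:ℝ)+1)) := by
  rw [P, P, Finset.prod_Icc_succ_top (by omega : 1 ≤ n+1)]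
  push_cast
  congr 1 <;> ring

lemma P_sq (n : ℕ) (hn : 1 ≤ n) : 2*(n:ℝ)+1 ≤ P n ^ 2 ∧ P n ^ 2 ≤ 4*n := by
  induction n, hn using Nat.le_induction with
  | base =>
    have : P 1 = 2 := by rw [P]; norm_num
    rw [this]; norm_num
  | succ n hn ih =>
    obtain ⟨h1, h2⟩ := ih
    have hx1 : (1:ℝ) ≤ (n:ℝ) := by exact_mod_cast hn
    set x := (n:ℝ) with hx
    have hd : (0:ℝ) < 2*x+1 := by linarith
    have hP : P (n+1) ^ 2 = P n ^ 2 * ((2*x+2)/(2*x+1))^2 := by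
      rw [P_succ, mul_pow]
    have hq2 : ((2*x+2)/(2*x+1))^2 = (2*x+2)^2/(2*x+1)^2 := by rw [div_pow]
    constructor
    · have l1 : (2*x+1) * ((2*x+2)/(2*x+1))^2 ≤ P n ^ 2 * ((2*x+2)/(2*x+1))^2 :=
        mul_le_mul_of_nonneg_right h1 (sq_nonneg _)
      have l2 : 2*((n:ℝ)+1)+1 ≤ (2*x+1) * ((2*x+2)/(2*x+1))^2 := by
        rw [hq2, ← mul_div_assoc, le_div_iff₀ (by positivity)]
        push_cast
        nlinarith
      rw [hP]; push_cast at l2 ⊢; linarith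
    · have u1 : P n ^ 2 * ((2*x+2)/(2*x+1))^2 ≤ 4*x * ((2*x+2)/(2*x+1))^2 :=
        mul_le_mul_of_nonneg_right h2 (sq_nonneg _)
      have u2 : 4*x * ((2*x+2)/(2*x+1))^2 ≤ 4*((n:ℝ)+1) := by
        rw [hq2, ← mul_div_assoc, div_le_iff₀ (by positivity)]
        push_cast
        nlinarith
      rw [hP]; push_cast at u2 ⊢; linarith

lemma P_lb (n : ℕ) (hn : 1 ≤ n) : Real.sqrt n ≤ P n := by
  have h := (P_sq n hn).1
  have h2 : (n:ℝ) ≤ P n ^ 2 := by nlinarith [Nat.cast_nonneg (α := ℝ) n]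
  calc Real.sqrt n ≤ Real.sqrt (P n ^ 2) := Real.sqrt_le_sqrt h2
    _ = P n := Real.sqrt_sq (P_pos n).le

lemma P_ub (n : ℕ) (hn : 1 ≤ n) : P n ≤ 2 * Real.sqrt n := by
  have h := (P_sq n hn).2
  calc P n = Real.sqrt (P n ^ 2) := (Real.sqrt_sq (P_pos n).le).symm
    _ ≤ Real.sqrt (4*n) := Real.sqrt_le_sqrt h
    _ = 2 * Real.sqrt n := by
        rw [show (4:ℝ)*n = 2^2 * n by ring, Real.sqrt_mul (by positivity),
          Real.sqrt_sq (by norm_num : (0:ℝ) ≤ 2)]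

lemma rpow32 (k : ℕ) (hk : 1 ≤ k) : (k:ℝ) ^ ((3:ℝ)/2) = k * Real.sqrt k := by
  have h0 : (0:ℝ) < k := by exact_mod_cast hk
  rw [show (3:ℝ)/2 = 1 + 1/2 by norm_num, Real.rpow_add h0, Real.rpow_one,
    ← Real.sqrt_eq_rpow]

lemma key (a : ℝ) (ha : 1 ≤ a) :
    1 / ((a+1) * Real.sqrt (a+1)) ≤ 2 / Real.sqrt a - 2 / Real.sqrt (a+1) := by
  have h0 : 0 < a := by linarith
  set s := Real.sqrt a with hsdef
  set t := Real.sqrt (a+1) with htdef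
  have hs : 0 < s := Real.sqrt_pos.2 h0
  have ht : 0 < t := Real.sqrt_pos.2 (by linarith)
  have hs2 : s^2 = a := Real.sq_sqrt h0.le
  have ht2 : t^2 = a+1 := Real.sq_sqrt (by linarith)
  have hst : s ≤ t := Real.sqrt_le_sqrt (by linarith)
  rw [div_sub_div _ _ hs.ne' ht.ne', div_le_div_iff₀ (by positivity) (by positivity)]
  nlinarith [mul_pos hs ht, sq_nonneg (t-s), mul_pos (mul_pos hs ht) ht,
    mul_le_mul_of_nonneg_right hst (sq_nonneg t)]

lemma sum_inv_sq (l : ℕ) (hl : 1 ≤ l) :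
    ∀ N, l ≤ N → ∑ m ∈ Finset.Icc l N, 1/((m:ℝ))^2 ≤ 2/(l:ℝ) - 1/(N:ℝ) := by
  refine Nat.le_induction ?_ ?_
  · rw [Finset.Icc_self, Finset.sum_singleton]
    have hl1 : (1:ℝ) ≤ l := by exact_mod_cast hl
    have h : 1/(l:ℝ)^2 ≤ 1/l :=
      one_div_le_one_div_of_le (by linarith) (by nlinarith)
    have h2 : 2/(l:ℝ) - 1/(l:ℝ) = 1/(l:ℝ) := by ring
    linarith
  · intro N hN ih
    rw [Finset.sum_Icc_succ_top (by omega : l ≤ N+1)]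
    have hN1 : (1:ℝ) ≤ N := by exact_mod_cast le_trans hl hN
    have hstep : 1/((N:ℝ)+1)^2 ≤ 1/(N:ℝ) - 1/((N:ℝ)+1) := by
      rw [div_sub_div _ _ (by linarith) (by linarith), div_le_div_iff₀ (by positivity) (by positivity)]
      nlinarith
    push_cast
    linarith

lemma sum_inv_32 (l : ℕ) (hl : 1 ≤ l) :
    ∀ n, l ≤ n → ∑ k ∈ Finset.Icc (l+1) n, 1/((k:ℝ)*Real.sqrt k)
      ≤ 2/Real.sqrt l - 2/Real.sqrt n := by
  refine Nat.le_induction ?_ ?_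
  · rw [Finset.Icc_eq_empty (by omega), Finset.sum_empty, sub_self]
  · intro n hn ih
    rw [Finset.sum_Icc_succ_top (by omega : l+1 ≤ n+1)]
    have hn1 : (1:ℝ) ≤ n := by exact_mod_cast le_trans hl hn
    have := key (n:ℝ) hn1
    push_cast
    linarith

/-- Summation bounds: with `ρ_n = ∏_{k=1}^n (2k)/(2k-1)`, `γ_k = 1/k` and `|r_m| ≤ C₁/m²`,
there are `C₃, C₄ > 0` such that
`(γ_k/ρ_{k-1}) Σ_{m=l}^{k-1} |r_m| ρ_m/√m ≤ C₃/(k^{3/2} l)` and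
`Σ_{k=l+1}^n (γ_k/ρ_{k-1}) Σ_{m=l}^{k-1} |r_m| ρ_m/√m ≤ C₄/l^{3/2}`. -/
theorem stmt15 (r : ℕ → ℝ) (C₁ : ℝ) (hC₁ : 0 < C₁)
    (hr : ∀ m : ℕ, 1 ≤ m → |r m| ≤ C₁ / (m:ℝ) ^ 2) :
    let ρ : ℕ → ℝ := fun n => ∏ k ∈ Finset.Icc 1 n, (2 * (k:ℝ)) / (2 * (k:ℝ) - 1)
    let γ : ℕ → ℝ := fun k => 1 / (k:ℝ)
    ∃ C₃ C₄ : ℝ, 0 < C₃ ∧ 0 < C₄ ∧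
      (∀ l k : ℕ, 1 ≤ l → l < k →
        γ k / ρ (k - 1) * ∑ m ∈ Finset.Icc l (k - 1), |r m| * ρ m / Real.sqrt m
          ≤ C₃ / ((k:ℝ) ^ ((3:ℝ)/2) * (l:ℝ)))
      ∧ ∀ n l : ℕ, 1 ≤ l →
        ∑ k ∈ Finset.Icc (l + 1) n,
            γ k / ρ (k - 1) * ∑ m ∈ Finset.Icc l (k - 1), |r m| * ρ m / Real.sqrt m
          ≤ C₄ / (l:ℝ) ^ ((3:ℝ)/2) := by
  intro ρ γ
  have hργ : ∀ n, ρ n = P n := fun n => rfl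
  have hγ : ∀ k, γ k = 1 / (k:ℝ) := fun k => rfl
  have hP1 : ∀ l k : ℕ, 1 ≤ l → l < k →
      γ k / ρ (k - 1) * ∑ m ∈ Finset.Icc l (k - 1), |r m| * ρ m / Real.sqrt m
        ≤ 8*C₁ / ((k:ℝ) ^ ((3:ℝ)/2) * (l:ℝ)) := by
    intro l k hl hlk
    have hk2 : 2 ≤ k := by omega
    have hl1 : (1:ℝ) ≤ l := by exact_mod_cast hl
    have hk0 : (2:ℝ) ≤ k := by exact_mod_cast hk2
    have hsk : 0 < Real.sqrt k := Real.sqrt_pos.2 (by linarith)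
    -- inner sum bound
    have hterm : ∀ m ∈ Finset.Icc l (k-1),
        |r m| * ρ m / Real.sqrt m ≤ 2*C₁/(m:ℝ)^2 := by
      intro m hm
      have hm1 : 1 ≤ m := le_trans hl (Finset.mem_Icc.1 hm).1
      have hm1' : (1:ℝ) ≤ m := by exact_mod_cast hm1
      have hsm : 0 < Real.sqrt m := Real.sqrt_pos.2 (by linarith)
      have h1 : |r m| * ρ m ≤ (C₁/(m:ℝ)^2) * (2*Real.sqrt m) := by
        rw [hργ]
        exact mul_le_mul (hr m hm1) (P_ub m hm1) (P_pos m).le (by positivity)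
      calc |r m| * ρ m / Real.sqrt m ≤ (C₁/(m:ℝ)^2) * (2*Real.sqrt m) / Real.sqrt m := by
            gcongr
        _ = 2*C₁/(m:ℝ)^2 := by
            field_simp
    have hS : ∑ m ∈ Finset.Icc l (k-1), |r m| * ρ m / Real.sqrt m ≤ 4*C₁/l := by
      have h := sum_inv_sq l hl (k-1) (by omega)
      have hkk : (0:ℝ) ≤ 1/((k-1:ℕ):ℝ) := by positivity
      calc ∑ m ∈ Finset.Icc l (k-1), |r m| * ρ m / Real.sqrt m
          ≤ ∑ m ∈ Finset.Icc l (k-1), 2*C₁/(m:ℝ)^2 := Finset.sum_le_sum hterm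
        _ = 2*C₁ * ∑ m ∈ Finset.Icc l (k-1), 1/(m:ℝ)^2 := by
            rw [Finset.mul_sum]; exact Finset.sum_congr rfl (fun m _ => by ring)
        _ ≤ 2*C₁ * (2/(l:ℝ) - 1/((k-1:ℕ):ℝ)) := by
            apply mul_le_mul_of_nonneg_left h (by positivity)
        _ ≤ 4*C₁/l := by
            have he : 2*C₁*(2/(l:ℝ) - 1/((k-1:ℕ):ℝ))
                = 4*C₁/(l:ℝ) - 2*C₁*(1/((k-1:ℕ):ℝ)) := by ring
            have hnn : 0 ≤ 2*C₁*(1/((k-1:ℕ):ℝ)) := by positivity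
            linarith
    -- factor bound
    have hSnn : 0 ≤ ∑ m ∈ Finset.Icc l (k-1), |r m| * ρ m / Real.sqrt m := by
      apply Finset.sum_nonneg
      intro m _
      have : 0 ≤ ρ m := by rw [hργ]; exact (P_pos m).le
      positivity
    have hcast : ((k-1:ℕ):ℝ) = (k:ℝ) - 1 := by
      push_cast [Nat.cast_sub (by omega : 1 ≤ k)]; ring
    have hPk : Real.sqrt k / 2 ≤ ρ (k-1) := by
      rw [hργ]
      have h1 : Real.sqrt ((k:ℝ)/4) ≤ Real.sqrt ((k-1:ℕ):ℝ) :=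
        Real.sqrt_le_sqrt (by rw [hcast]; linarith)
      have h2 : Real.sqrt ((k:ℝ)/4) = Real.sqrt k / 2 := by
        rw [show (k:ℝ)/4 = k * (1/2)^2 by ring, Real.sqrt_mul (by positivity),
          Real.sqrt_sq (by norm_num : (0:ℝ) ≤ 1/2)]
        ring
      have h3 := P_lb (k-1) (by omega)
      linarith
    have hρpos : 0 < ρ (k-1) := by rw [hργ]; exact P_pos _
    have hB : γ k / ρ (k-1) ≤ 2/((k:ℝ) * Real.sqrt k) := by
      rw [hγ]
      calc (1/(k:ℝ)) / ρ (k-1) ≤ (1/(k:ℝ)) / (Real.sqrt k / 2) := by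
            gcongr
        _ = 2/((k:ℝ) * Real.sqrt k) := by
            field_simp
    have hBnn : (0:ℝ) ≤ 2/((k:ℝ) * Real.sqrt k) := by positivity
    calc γ k / ρ (k-1) * ∑ m ∈ Finset.Icc l (k-1), |r m| * ρ m / Real.sqrt m
        ≤ (2/((k:ℝ) * Real.sqrt k)) * (4*C₁/l) := by
          apply mul_le_mul hB hS hSnn hBnn
      _ = 8*C₁ / ((k:ℝ) ^ ((3:ℝ)/2) * (l:ℝ)) := by
          rw [rpow32 k (by omega)]
          rw [div_mul_div_comm]
          rw [show (2:ℝ)*(4*C₁) = 8*C₁ by ring]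
  refine ⟨8*C₁, 16*C₁, by positivity, by positivity, hP1, ?_⟩
  intro n l hl
  by_cases hn : n ≤ l
  · rw [Finset.Icc_eq_empty (by omega), Finset.sum_empty]
    positivity
  · push_neg at hn
    have hl1 : (1:ℝ) ≤ l := by exact_mod_cast hl
    have hsl : 0 < Real.sqrt l := Real.sqrt_pos.2 (by linarith)
    have hsn : 0 ≤ 2/Real.sqrt (n:ℝ) := by positivity
    calc ∑ k ∈ Finset.Icc (l + 1) n,
            γ k / ρ (k - 1) * ∑ m ∈ Finset.Icc l (k - 1), |r m| * ρ m / Real.sqrt m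
        ≤ ∑ k ∈ Finset.Icc (l + 1) n, 8*C₁ / ((k:ℝ) ^ ((3:ℝ)/2) * (l:ℝ)) := by
          apply Finset.sum_le_sum
          intro k hk
          exact hP1 l k hl (by have := (Finset.mem_Icc.1 hk).1; omega)
      _ = (8*C₁/(l:ℝ)) * ∑ k ∈ Finset.Icc (l + 1) n, 1/((k:ℝ)*Real.sqrt k) := by
          rw [Finset.mul_sum]
          apply Finset.sum_congr rfl
          intro k hk
          have hk1 : 1 ≤ k := by have := (Finset.mem_Icc.1 hk).1; omega
          have hk0 : (0:ℝ) < k := by exact_mod_cast hk1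
          have hsk : 0 < Real.sqrt k := Real.sqrt_pos.2 hk0
          rw [rpow32 k hk1]
          field_simp
      _ ≤ (8*C₁/(l:ℝ)) * (2/Real.sqrt l - 2/Real.sqrt n) := by
          apply mul_le_mul_of_nonneg_left (sum_inv_32 l hl n hn.le) (by positivity)
      _ ≤ 16*C₁ / (l:ℝ) ^ ((3:ℝ)/2) := by
          rw [rpow32 l hl]
          have key2 : (8*C₁/(l:ℝ))*(2/Real.sqrt l) = 16*C₁/((l:ℝ)*Real.sqrt l) := by
            rw [div_mul_div_comm]
            rw [show (8:ℝ)*C₁*2 = 16*C₁ by ring]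
          have expand : (8*C₁/(l:ℝ))*(2/Real.sqrt l - 2/Real.sqrt n)
              = 16*C₁/((l:ℝ)*Real.sqrt l) - (8*C₁/(l:ℝ))*(2/Real.sqrt n) := by
            rw [mul_sub, key2]
          have hnn : 0 ≤ (8*C₁/(l:ℝ))*(2/Real.sqrt n) := by positivity
          linarith
end
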